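/- Let α be a real number and set Q₁ = sinh(2α) − cosh(2α) and Q₂ = (sinh²(2α) − sinh(2α)·cosh(2α))/cosh(2α). Then Q₁ < 0 and Q₁² − Q₂² + 4 > 0; consequently every complex root of the quadratic λ² − 2Q₁λ + (Q₁² − Q₂² + 4) has negative real part, and hence the 4×4 matrix A = [[Q₂+Q₁, 0, 2, 0],[2Q₁, Q₁−Q₂, 0, −2],[−2, 0, Q₁−Q₂, 0],[0, 2, 2Q₁, Q₂+Q₁]], whose characteristic polynomial is (λ² − 2Q₁λ + Q₁² − Q₂² + 4)², is Hurwitz. -/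
import Mathlib


/-!
STATEMENT 13: With Q₁ = sinh 2α − cosh 2α and Q₂ = (sinh²2α − sinh 2α·cosh 2α)/cosh 2α,
one has Q₁ < 0 and Q₁² − Q₂² + 4 > 0; consequently every complex root of
λ² − 2Q₁λ + (Q₁² − Q₂² + 4) has negative real part, and the drift matrix A
(whose characteristic polynomial is (λ² − 2Q₁λ + Q₁² − Q₂² + 4)²) is Hurwitz.
-/

open Matrix

noncomputable section

def Q1 (α : ℝ) : ℝ := Real.sinh (2*α) - Real.cosh (2*α)

def Q2 (α : ℝ) : ℝ :=
  (Real.sinh (2*α)^2 - Real.sinh (2*α) * Real.cosh (2*α)) / Real.cosh (2*α)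

/-- The drift matrix A of the first cascade realization. -/
def driftA (α : ℝ) : Matrix (Fin 4) (Fin 4) ℝ :=
  !![Q2 α + Q1 α, 0, 2, 0;
     2 * Q1 α, Q1 α - Q2 α, 0, -2;
     -2, 0, Q1 α - Q2 α, 0;
     0, 2, 2 * Q1 α, Q2 α + Q1 α]

/-- A real square matrix is Hurwitz if every eigenvalue (complex root of its
characteristic polynomial) has negative real part. -/
def IsHurwitz {m : Type*} [Fintype m] [DecidableEq m] (A : Matrix m m ℝ) : Prop :=
  ∀ z : ℂ, (A.map Complex.ofReal).charpoly.IsRoot z → z.re < 0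

/-- Roots of a monic real quadratic with negative sum coefficient and positive
constant coefficient have negative real part. -/
lemma quad_root_re_neg (q c : ℝ) (hq : q < 0) (hc : 0 < c) (z : ℂ)
    (hz : z ^ 2 - 2 * (q : ℂ) * z + (c : ℂ) = 0) : z.re < 0 := by
  have hre := congrArg Complex.re hz
  have him := congrArg Complex.im hz
  obtain ⟨x, y⟩ := z
  simp [Complex.ext_iff, pow_two, Complex.mul_re, Complex.mul_im] at hre him
  rcases mul_eq_zero.mp (show y * (x - q) = 0 by nlinarith) with h | h
  · subst h
    simp only [mul_zero, sub_zero] at hre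
    nlinarith
  · have : x = q := by linarith
    simpa [this] using hq

/-- The key determinant identity. -/
lemma det_aux (a b z : ℂ) :
    (!![z - (b + a), 0, -2, 0;
        -(2 * a), z - (a - b), 0, 2;
        2, 0, z - (a - b), 0;
        0, -2, -(2 * a), z - (b + a)] : Matrix (Fin 4) (Fin 4) ℂ).det
    = (z ^ 2 - 2 * a * z + (a ^ 2 - b ^ 2 + 4)) ^ 2 := by
  set_option maxHeartbeats 2000000 in
  simp [Matrix.det_succ_row_zero, Fin.sum_univ_succ, Fin.succAbove]
  ring

theorem driftA_hurwitz (α : ℝ) :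
    Q1 α < 0 ∧
    Q1 α ^ 2 - Q2 α ^ 2 + 4 > 0 ∧
    (∀ z : ℂ, z ^ 2 - 2 * (Q1 α : ℂ) * z + ((Q1 α : ℂ) ^ 2 - (Q2 α : ℂ) ^ 2 + 4) = 0 →
      z.re < 0) ∧
    IsHurwitz (driftA α) := by
  have hcosh : 0 < Real.cosh (2*α) := Real.cosh_pos _
  have hid : Real.cosh (2*α) ^ 2 - Real.sinh (2*α) ^ 2 = 1 :=
    Real.cosh_sq_sub_sinh_sq (2*α)
  have h1 : Q1 α < 0 := by
    have h := Real.cosh_sub_sinh (2*α)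
    have h' := Real.exp_pos (-(2*α))
    unfold Q1; linarith
  have h2 : Q1 α ^ 2 - Q2 α ^ 2 + 4 > 0 := by
    have hQ2 : Q2 α = Q1 α * (Real.sinh (2*α) / Real.cosh (2*α)) := by
      unfold Q1 Q2
      rw [← mul_div_assoc]
      congr 1
      ring
    have habs : Q2 α ^ 2 ≤ Q1 α ^ 2 := by
      rw [hQ2, mul_pow, div_pow]
      have hs : Real.sinh (2*α) ^ 2 / Real.cosh (2*α) ^ 2 ≤ 1 := by
        rw [div_le_one (by positivity)]; linarith
      nlinarith [sq_nonneg (Q1 α)]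
    linarith
  have hroot : ∀ z : ℂ,
      z ^ 2 - 2 * (Q1 α : ℂ) * z + ((Q1 α : ℂ) ^ 2 - (Q2 α : ℂ) ^ 2 + 4) = 0 →
      z.re < 0 := by
    intro z hz
    have hc : ((Q1 α ^ 2 - Q2 α ^ 2 + 4 : ℝ) : ℂ)
        = (Q1 α : ℂ) ^ 2 - (Q2 α : ℂ) ^ 2 + 4 := by push_cast; ring
    exact quad_root_re_neg (Q1 α) (Q1 α ^ 2 - Q2 α ^ 2 + 4) h1 h2 z (by rw [hc]; exact hz)
  refine ⟨h1, h2, hroot, ?_⟩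
  intro z hz
  have hM : (((driftA α).map Complex.ofReal).charmatrix.map (Polynomial.eval z))
      = !![z - ((Q2 α : ℂ) + (Q1 α : ℂ)), 0, -2, 0;
           -(2 * (Q1 α : ℂ)), z - ((Q1 α : ℂ) - (Q2 α : ℂ)), 0, 2;
           2, 0, z - ((Q1 α : ℂ) - (Q2 α : ℂ)), 0;
           0, -2, -(2 * (Q1 α : ℂ)), z - ((Q2 α : ℂ) + (Q1 α : ℂ))] := by
    ext i j
    fin_cases i <;> fin_cases j <;>
      simp [driftA, Matrix.charmatrix_apply, Matrix.map_apply, Matrix.diagonal] <;>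
      push_cast <;> ring
  have hev : ((driftA α).map Complex.ofReal).charpoly.eval z =
      (z ^ 2 - 2 * (Q1 α : ℂ) * z + ((Q1 α : ℂ) ^ 2 - (Q2 α : ℂ) ^ 2 + 4)) ^ 2 := by
    rw [Matrix.charpoly, ← Polynomial.coe_evalRingHom, RingHom.map_det]
    simp only [RingHom.mapMatrix_apply, Polynomial.coe_evalRingHom]
    rw [hM, det_aux]
  rw [Polynomial.IsRoot] at hz
  rw [hz] at hev
  exact hroot z (pow_eq_zero_iff (n := 2) (by norm_num) |>.mp hev.symm)
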